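/- Assume s ≥ t+2. Let p ≥ 0 be an integer, let z ∈ R be an invertible power series, and let l = Σ_{i=1}^h a_i x_i with a_i ∈ R. If l² ∈ I_{p,z} + n³, then a₁ ∈ n; and if moreover p = 0, then both a₁ ∈ n and a₂ ∈ n. -/

import Mathlib

noncomputable section

open MvPowerSeries

/-- The maximal ideal `(x₁, …, x_h)` of the power series ring. -/
def nIdeal (k : Type*) [Field k] (h : ℕ) : Ideal (MvPowerSeries (Fin h) k) :=
  Ideal.span (Set.range (X : Fin h → MvPowerSeries (Fin h) k))

/-- The ideal generated (in terms of a system of generators `y`) by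
`y i * y j` (`i < j`, `(i,j) ≠ (0,1)`), `y j ^ 2 - y 0 ^ s` (`j ≥ 2`),
`y 1 ^ 2 - y 0 ^ (p+1) * y 1 - w * y 0 ^ (s - t + 1)` and `y 0 ^ t * y 1`. -/
def Iy (k : Type*) [Field k] (n s t p : ℕ) (w : MvPowerSeries (Fin (n + 2)) k)
    (y : Fin (n + 2) → MvPowerSeries (Fin (n + 2)) k) :
    Ideal (MvPowerSeries (Fin (n + 2)) k) :=
  Ideal.span
    ({f | ∃ i j : Fin (n + 2), i < j ∧ (i, j) ≠ (0, 1) ∧ f = y i * y j} ∪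
     {f | ∃ j : Fin (n + 2), 2 ≤ (j : ℕ) ∧ f = y j ^ 2 - y 0 ^ s} ∪
     {y 1 ^ 2 - y 0 ^ (p + 1) * y 1 - w * y 0 ^ (s - t + 1), y 0 ^ t * y 1})

/-- The ideal `I_{p,z}`. -/
def Ipz (k : Type*) [Field k] (n s t p : ℕ) (z : MvPowerSeries (Fin (n + 2)) k) :
    Ideal (MvPowerSeries (Fin (n + 2)) k) :=
  Iy k n s t p z X

/-- The ideal `I_a`. -/
def Ia (k : Type*) [Field k] (n s t : ℕ) (a : MvPowerSeries (Fin (n + 2)) k) :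
    Ideal (MvPowerSeries (Fin (n + 2)) k) :=
  Ideal.span
    ({f | ∃ i j : Fin (n + 2), i < j ∧ (i, j) ≠ (0, 1) ∧ f = X i * X j} ∪
     {f | ∃ j : Fin (n + 2), 2 ≤ (j : ℕ) ∧ f = X j ^ 2 - X 0 ^ s} ∪
     {X 1 ^ 2 - a * X 0 * X 1 - X 0 ^ (s - t + 1), X 0 ^ t * X 1})

/-- Two ideals are isomorphic iff the quotient `k`-algebras are isomorphic. -/
def IdealIso (k : Type*) [Field k] {h : ℕ} (I J : Ideal (MvPowerSeries (Fin h) k)) : Prop :=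
  Nonempty ((MvPowerSeries (Fin h) k ⧸ I) ≃ₐ[k] (MvPowerSeries (Fin h) k ⧸ J))

/-- The ideal `(x₂, …, x_h)`. -/
def offIdeal (k : Type*) [Field k] (n : ℕ) : Ideal (MvPowerSeries (Fin (n + 2)) k) :=
  Ideal.span {f | ∃ i : Fin (n + 2), i ≠ 0 ∧ f = X i}

end




section Helpers

open MvPowerSeries Finsupp

variable {k : Type*} [Field k] {h : ℕ}

/-- classification of monomials below a "single" monomial -/
private lemma le_single_classify {m : Fin h →₀ ℕ} {i : Fin h} {c : ℕ}
    (hm : m ≤ Finsupp.single i c) : m = Finsupp.single i (m i) := by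
  ext j
  rcases eq_or_ne j i with rfl | hj
  · simp
  · have h2 := (Finsupp.le_def.mp hm) j
    simp only [Finsupp.single_apply, if_neg (Ne.symm hj)] at h2 ⊢
    omega

private def deg (m : Fin h →₀ ℕ) : ℕ := ∑ j, m j

private lemma deg_mono {m m' : Fin h →₀ ℕ} (hm : m ≤ m') : deg m ≤ deg m' :=
  Finset.sum_le_sum fun j _ => Finsupp.le_def.mp hm j

private lemma deg_add (m m' : Fin h →₀ ℕ) : deg (m + m') = deg m + deg m' := by
  simp [deg, Finset.sum_add_distrib]

private lemma deg_single (i : Fin h) (c : ℕ) : deg (Finsupp.single i c) = c := by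
  simp [deg, Finsupp.single_apply]

private lemma ne_of_deg_lt {m d : Fin h →₀ ℕ} (hd : deg m < deg d) : m ≠ d := by
  rintro rfl; exact lt_irrefl _ hd

/-- key computation: if `f` vanishes on all monomials strictly below `d`,
then `coeff d (r * f) = (coeff 0 r) * coeff d f`. -/
private lemma coeff_mul_eq (d : Fin h →₀ ℕ) (r f : MvPowerSeries (Fin h) k)
    (hf : ∀ m2, m2 ≤ d → m2 ≠ d → coeff m2 f = 0) :
    coeff d (r * f) = coeff 0 r * coeff d f := by
  classical
  rw [coeff_mul]
  refine Finset.sum_eq_single_of_mem (0, d) (Finset.HasAntidiagonal.mem_antidiagonal.mpr (zero_add d)) ?_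
  rintro ⟨m1, m2⟩ hp hne
  have hadd : m1 + m2 = d := Finset.HasAntidiagonal.mem_antidiagonal.mp hp
  rcases eq_or_ne m2 d with rfl | hm2
  · have hm1 : m1 = 0 := by
      have : m1 + m2 = 0 + m2 := by rw [hadd, zero_add]
      exact add_right_cancel this
    exact absurd (by rw [hm1]) hne
  · rw [hf m2 (hadd ▸ le_add_self) hm2, mul_zero]

/-- the ideal of power series whose coefficients vanish in degrees `< c` -/
private def Dlt (c : ℕ) : Ideal (MvPowerSeries (Fin h) k) where
  carrier := {f | ∀ m, deg m < c → coeff m f = 0}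
  zero_mem' := fun m _ => map_zero _
  add_mem' := fun hf hg m hm => by rw [map_add, hf m hm, hg m hm, add_zero]
  smul_mem' := fun r f hf => by
    intro m hm
    rw [smul_eq_mul, coeff_mul]
    refine Finset.sum_eq_zero fun p hp => ?_
    have hadd : p.1 + p.2 = m := Finset.HasAntidiagonal.mem_antidiagonal.mp hp
    rw [hf p.2 (lt_of_le_of_lt (deg_mono (hadd ▸ le_add_self)) hm), mul_zero]

private lemma mem_Dlt {c : ℕ} {f : MvPowerSeries (Fin h) k} :
    f ∈ (Dlt c : Ideal (MvPowerSeries (Fin h) k)) ↔ ∀ m, deg m < c → coeff m f = 0 :=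
  Iff.rfl

private lemma nIdeal_le_Dlt : nIdeal k h ≤ Dlt 1 := by
  rw [nIdeal, Ideal.span_le]
  rintro f ⟨i, rfl⟩
  intro m hm
  rw [X_def]
  refine coeff_monomial_ne ?_ 1
  exact ne_of_deg_lt (by rw [deg_single]; exact hm)

private lemma Dlt_mul (a b : ℕ) :
    (Dlt a : Ideal (MvPowerSeries (Fin h) k)) * Dlt b ≤ Dlt (a + b) := by
  rw [Ideal.mul_le]
  intro f hf g hg m hm
  rw [coeff_mul]
  refine Finset.sum_eq_zero fun p hp => ?_
  have hsum : deg p.1 + deg p.2 = deg m := by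
    rw [← deg_add, Finset.HasAntidiagonal.mem_antidiagonal.mp hp]
  rcases lt_or_ge (deg p.1) a with h1 | h1
  · rw [hf p.1 h1, zero_mul]
  · rw [hg p.2 (by omega), mul_zero]

private lemma pow3_le_Dlt : (nIdeal k h) ^ 3 ≤ Dlt 3 := by
  have h1 := nIdeal_le_Dlt (k := k) (h := h)
  have e3 : (nIdeal k h) ^ 3 = nIdeal k h * (nIdeal k h * nIdeal k h) := by ring
  rw [e3]
  refine le_trans (Ideal.mul_mono h1 (le_trans (Ideal.mul_mono h1 h1) (Dlt_mul 1 1))) ?_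
  exact Dlt_mul 1 2

end Helpers

section Helpers2

open MvPowerSeries Finsupp

variable {k : Type*} [Field k] {h : ℕ}

/-- the witness series for the decomposition of a series with zero constant term -/
private noncomputable def gdec (f : MvPowerSeries (Fin h) k) (i : Fin h) : MvPowerSeries (Fin h) k :=
  fun m => if ∀ j, j < i → m j = 0 then coeff (m + Finsupp.single i 1) f else 0

private lemma gdec_coeff (f : MvPowerSeries (Fin h) k) (i : Fin h) (d : Fin h →₀ ℕ) :
    coeff d (gdec f i)
      = if ∀ j, j < i → d j = 0 then coeff (d + Finsupp.single i 1) f else 0 := rfl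

private lemma mem_nIdeal_of_constantCoeff {f : MvPowerSeries (Fin h) k}
    (hf : coeff 0 f = 0) : f ∈ nIdeal k h := by
  classical
  have hterm : ∀ (m : Fin h →₀ ℕ) (i : Fin h),
      coeff m (gdec f i * X i)
        = if Finsupp.single i 1 ≤ m then coeff (m - Finsupp.single i 1) (gdec f i) else 0 := by
    intro m i
    rw [X_def, coeff_mul_monomial]
    split_ifs <;> simp
  have key : f = ∑ i, gdec f i * X i := by
    ext m
    rw [map_sum]
    rcases eq_or_ne m 0 with rfl | hm
    · rw [hf]
      symm
      refine Finset.sum_eq_zero fun i _ => ?_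
      rw [hterm, if_neg]
      intro hle
      have := Finsupp.single_le_iff.mp hle
      simp at this
    · have hsupp : m.support.Nonempty := Finsupp.support_nonempty_iff.mpr hm
      set i0 := m.support.min' hsupp with hi0
      have hmem : i0 ∈ m.support := m.support.min'_mem hsupp
      have hi0ne : m i0 ≠ 0 := Finsupp.mem_support_iff.mp hmem
      have hmin : ∀ j, j < i0 → m j = 0 := by
        intro j hj
        by_contra hne
        exact absurd (m.support.min'_le j (Finsupp.mem_support_iff.mpr hne)) (not_le.mpr hj)
      rw [Finset.sum_eq_single i0 ?other (fun hcon => absurd (Finset.mem_univ i0) hcon)]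
      · rw [hterm, if_pos (Finsupp.single_le_iff.mpr (by omega)), gdec_coeff, if_pos ?cond]
        · have hmm : m - Finsupp.single i0 1 + Finsupp.single i0 1 = m := by
            ext j
            rw [Finsupp.add_apply, Finsupp.tsub_apply]
            rcases eq_or_ne j i0 with rfl | hj
            · simp only [Finsupp.single_eq_same]
              omega
            · simp [Finsupp.single_apply, Ne.symm hj]
          rw [hmm]
        · intro j hj
          rw [Finsupp.tsub_apply, hmin j hj]
          simp
      · intro i _ hne
        rw [hterm]
        split_ifs with hle
        · rw [gdec_coeff, if_neg]
          intro hall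
          have hlt : i0 < i := by
            have hle' : i0 ≤ i := m.support.min'_le i
              (Finsupp.mem_support_iff.mpr (by
                have := Finsupp.single_le_iff.mp hle; omega))
            exact lt_of_le_of_ne hle' (Ne.symm hne)
          have := hall i0 hlt
          rw [Finsupp.tsub_apply, Finsupp.single_apply,
            if_neg (ne_of_gt hlt)] at this
          exact hi0ne (by omega)
        · rfl
  rw [key]
  exact Ideal.sum_mem _ fun i _ =>
    Ideal.mul_mem_left _ _ (Ideal.subset_span ⟨i, rfl⟩)

/-- the ideal of series with vanishing coefficients below `xᵢ²` -/
private def Jz (i : Fin h) : Ideal (MvPowerSeries (Fin h) k) where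
  carrier := {f | ∀ m, m ≤ Finsupp.single i 2 → coeff m f = 0}
  zero_mem' := fun m _ => map_zero _
  add_mem' := fun hf hg m hm => by rw [map_add, hf m hm, hg m hm, add_zero]
  smul_mem' := fun r f hf => by
    intro m hm
    rw [smul_eq_mul, coeff_mul_eq m r f (fun m2 hm2 _ => hf m2 (le_trans hm2 hm)),
      hf m hm, mul_zero]

private lemma mem_Jz {i : Fin h} {f : MvPowerSeries (Fin h) k} :
    f ∈ Jz i ↔ ∀ m, m ≤ Finsupp.single i 2 → coeff m f = 0 := Iff.rfl

private lemma Dlt3_le_Jz (i : Fin h) : (Dlt 3 : Ideal (MvPowerSeries (Fin h) k)) ≤ Jz i :=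
  fun f hf m hm => hf m (lt_of_le_of_lt (deg_mono hm) (by rw [deg_single]; omega))

end Helpers2

section Helpers3

open MvPowerSeries Finsupp

variable {k : Type*} [Field k] {n : ℕ}

private lemma h01 : (0 : Fin (n + 2)) ≠ 1 := Fin.ne_of_val_ne (by simp)

/-- classification of monomials below `x₀x₁` -/
private lemma sub_d1 {m : Fin (n + 2) →₀ ℕ}
    (hm : m ≤ Finsupp.single (0 : Fin (n + 2)) 1 + Finsupp.single 1 1) :
    m = Finsupp.single (0 : Fin (n + 2)) 1 + Finsupp.single 1 1
      ∨ m ≤ Finsupp.single (0 : Fin (n + 2)) 1 ∨ m ≤ Finsupp.single (1 : Fin (n + 2)) 1 := by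
  have key : ∀ j : Fin (n + 2), j ≠ 0 → j ≠ 1 → m j = 0 := by
    intro j hj0 hj1
    have := Finsupp.le_def.mp hm j
    simpa [Finsupp.single_apply, Ne.symm hj0, Ne.symm hj1] using this
  have h0 : m 0 ≤ 1 := by
    have := Finsupp.le_def.mp hm 0
    simpa [Finsupp.single_apply, Ne.symm (h01 (n := n))] using this
  have h1 : m 1 ≤ 1 := by
    have := Finsupp.le_def.mp hm 1
    simpa [Finsupp.single_apply, h01 (n := n)] using this
  rcases Nat.eq_zero_or_pos (m 0) with hz0 | hp0
  · right; right
    rw [Finsupp.le_def]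
    intro j
    rcases eq_or_ne j 0 with rfl | hj0
    · simp [Finsupp.single_apply, Ne.symm (h01 (n := n)), hz0]
    rcases eq_or_ne j 1 with rfl | hj1
    · simpa [Finsupp.single_apply] using h1
    · simp [Finsupp.single_apply, Ne.symm hj1, key j hj0 hj1]
  rcases Nat.eq_zero_or_pos (m 1) with hz1 | hp1
  · right; left
    rw [Finsupp.le_def]
    intro j
    rcases eq_or_ne j 0 with rfl | hj0
    · simpa [Finsupp.single_apply] using h0
    rcases eq_or_ne j 1 with rfl | hj1
    · simp [Finsupp.single_apply, h01 (n := n), hz1]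
    · simp [Finsupp.single_apply, Ne.symm hj0, key j hj0 hj1]
  · left
    ext j
    rcases eq_or_ne j 0 with rfl | hj0
    · simp [Finsupp.single_apply, Ne.symm (h01 (n := n))]
      omega
    rcases eq_or_ne j 1 with rfl | hj1
    · simp [Finsupp.single_apply, h01 (n := n)]
      omega
    · simp [Finsupp.single_apply, Ne.symm hj0, Ne.symm hj1, key j hj0 hj1]

private lemma below_d2 {f : MvPowerSeries (Fin (n + 2)) k}
    (hsmall : ∀ m, (m ≤ Finsupp.single (0 : Fin (n + 2)) 1
        ∨ m ≤ Finsupp.single (1 : Fin (n + 2)) 1) → coeff m f = 0) :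
    ∀ m2, m2 ≤ Finsupp.single (1 : Fin (n + 2)) 2 →
      m2 ≠ Finsupp.single (1 : Fin (n + 2)) 2 → coeff m2 f = 0 := by
  intro m2 hle hne
  have hcl := le_single_classify hle
  have hb : m2 1 ≤ 2 := by
    have := Finsupp.le_def.mp hle 1
    simpa using this
  have hb2 : m2 1 ≠ 2 := by
    intro he
    exact hne (by rw [hcl, he])
  refine hsmall m2 (Or.inr ?_)
  rw [hcl]
  exact Finsupp.single_le_single.mpr (by omega)

private lemma below_d1 {f : MvPowerSeries (Fin (n + 2)) k}
    (hsmall : ∀ m, (m ≤ Finsupp.single (0 : Fin (n + 2)) 1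
        ∨ m ≤ Finsupp.single (1 : Fin (n + 2)) 1) → coeff m f = 0) :
    ∀ m2, m2 ≤ Finsupp.single (0 : Fin (n + 2)) 1 + Finsupp.single 1 1 →
      m2 ≠ Finsupp.single (0 : Fin (n + 2)) 1 + Finsupp.single 1 1 → coeff m2 f = 0 := by
  intro m2 hle hne
  rcases sub_d1 hle with he | hle' | hle'
  · exact absurd he hne
  · exact hsmall m2 (Or.inl hle')
  · exact hsmall m2 (Or.inr hle')

/-- the ideal of series `f` with `f_{x₁²} + f_{x₀x₁} = 0` and vanishing coefficients
in degrees `≤ 1`. -/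
private def J1 : Ideal (MvPowerSeries (Fin (n + 2)) k) where
  carrier := {f | (coeff (Finsupp.single (1 : Fin (n + 2)) 2) f
      + coeff (Finsupp.single (0 : Fin (n + 2)) 1 + Finsupp.single 1 1) f = 0)
    ∧ ∀ m, (m ≤ Finsupp.single (0 : Fin (n + 2)) 1
        ∨ m ≤ Finsupp.single (1 : Fin (n + 2)) 1) → coeff m f = 0}
  zero_mem' := ⟨by simp, fun m _ => map_zero _⟩
  add_mem' := fun {f g} hf hg => by
    refine ⟨?_, fun m hm => by rw [map_add, hf.2 m hm, hg.2 m hm, add_zero]⟩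
    rw [map_add, map_add]
    linear_combination hf.1 + hg.1
  smul_mem' := fun r f hf => by
    refine ⟨?_, ?_⟩
    · rw [smul_eq_mul, coeff_mul_eq _ r f (below_d2 hf.2), coeff_mul_eq _ r f (below_d1 hf.2),
        ← mul_add, hf.1, mul_zero]
    · intro m hm
      rw [smul_eq_mul, coeff_mul_eq m r f ?below, hf.2 m hm, mul_zero]
      case below =>
        intro m2 hm2 _
        rcases hm with hm | hm
        · exact hf.2 m2 (Or.inl (le_trans hm2 hm))
        · exact hf.2 m2 (Or.inr (le_trans hm2 hm))

private lemma mem_J1 {f : MvPowerSeries (Fin (n + 2)) k} :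
    f ∈ (J1 : Ideal (MvPowerSeries (Fin (n + 2)) k)) ↔
      (coeff (Finsupp.single (1 : Fin (n + 2)) 2) f
        + coeff (Finsupp.single (0 : Fin (n + 2)) 1 + Finsupp.single 1 1) f = 0)
      ∧ ∀ m, (m ≤ Finsupp.single (0 : Fin (n + 2)) 1
          ∨ m ≤ Finsupp.single (1 : Fin (n + 2)) 1) → coeff m f = 0 := Iff.rfl

private lemma Dlt3_le_J1 : (Dlt 3 : Ideal (MvPowerSeries (Fin (n + 2)) k)) ≤ J1 := by
  intro f hf
  rw [mem_J1]
  have hdeg1 : ∀ m : Fin (n + 2) →₀ ℕ,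
      (m ≤ Finsupp.single (0 : Fin (n + 2)) 1 ∨ m ≤ Finsupp.single (1 : Fin (n + 2)) 1) →
      deg m ≤ 1 := by
    rintro m (hm | hm) <;> exact le_trans (deg_mono hm) (by rw [deg_single])
  refine ⟨?_, fun m hm => hf m (by have := hdeg1 m hm; omega)⟩
  rw [hf _ (by rw [deg_single]; omega), hf _ (by rw [deg_add, deg_single, deg_single]; omega),
    add_zero]

end Helpers3

section Helpers4

open MvPowerSeries Finsupp

variable {k : Type*} [Field k] {h : ℕ}

private lemma vanish_index {m d B : Fin h →₀ ℕ} (hm : m ≤ B) (j : Fin h)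
    (hj : B j < d j) (c : k) : coeff m (monomial d c) = 0 := by
  refine coeff_monomial_ne (fun he => ?_) c
  have := Finsupp.le_def.mp hm j
  rw [he] at this
  omega

private lemma vanish_zterm {m B : Fin h →₀ ℕ} (hm : m ≤ B) {q : ℕ} (i : Fin h)
    (hq : B i < q) (z : MvPowerSeries (Fin h) k) : coeff m (z * X i ^ q) = 0 := by
  rw [X_pow_eq, coeff_mul_monomial, if_neg]
  intro hle
  have h1 := Finsupp.single_le_iff.mp hle
  have h2 := Finsupp.le_def.mp hm i
  omega

private lemma vanish_pair {i j b : Fin h} (hij : i ≠ j) {m B : Fin h →₀ ℕ} (hm : m ≤ B)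
    (hB : ∀ l, l ≠ b → B l = 0) (c : k) :
    coeff m (monomial (Finsupp.single i 1 + Finsupp.single j 1) c) = 0 := by
  by_cases hib : i = b
  · have hjb : j ≠ b := by rw [← hib]; exact Ne.symm hij
    refine vanish_index hm j ?_ c
    rw [hB j hjb]
    simp [Finsupp.single_apply, hij]
  · refine vanish_index hm i ?_ c
    rw [hB i hib]
    simp [Finsupp.single_apply]

private lemma XX_eq (i j : Fin h) : (X i : MvPowerSeries (Fin h) k) * X j
    = monomial (Finsupp.single i 1 + Finsupp.single j 1) 1 := by
  rw [X_def, X_def, monomial_mul_monomial, one_mul]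

private lemma XpowX_eq (i j : Fin h) (c : ℕ) : (X i : MvPowerSeries (Fin h) k) ^ c * X j
    = monomial (Finsupp.single i c + Finsupp.single j 1) 1 := by
  rw [X_pow_eq, X_def, monomial_mul_monomial, one_mul]

end Helpers4

section Helpers5

open MvPowerSeries Finsupp

variable {k : Type*} [Field k] {n : ℕ}

private lemma Ipz_le_Jz {s t : ℕ} (p : ℕ) (hs : 3 ≤ s) (hq : 3 ≤ s - t + 1)
    (z : MvPowerSeries (Fin (n + 2)) k) :
    Ipz k n s t p z ≤ Jz (0 : Fin (n + 2)) := by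
  rw [Ipz, Iy, Ideal.span_le]
  intro f hf
  simp only [Set.mem_union, Set.mem_setOf_eq, Set.mem_insert_iff, Set.mem_singleton_iff] at hf
  rw [SetLike.mem_coe, mem_Jz]
  have hB : ∀ l : Fin (n + 2), l ≠ 0 → (Finsupp.single (0 : Fin (n + 2)) 2) l = 0 := by
    intro l hl
    simp [Finsupp.single_apply, Ne.symm hl]
  rcases hf with ((⟨i, j, hij, hne, rfl⟩ | ⟨j, hj2, rfl⟩) | rfl | rfl)
  · intro m hm
    rw [XX_eq]
    exact vanish_pair (b := 0) (ne_of_lt hij) hm hB 1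
  · intro m hm
    have hj0 : j ≠ 0 := by
      intro he
      rw [he] at hj2
      simp at hj2
    rw [map_sub, X_pow_eq, X_pow_eq,
      vanish_index hm j (by rw [hB j hj0]; simp) 1,
      vanish_index hm 0 (by simp only [Finsupp.single_eq_same]; omega) 1, sub_zero]
  · intro m hm
    have h10 : (Finsupp.single (0 : Fin (n + 2)) 2) 1 = 0 := hB 1 (Ne.symm (h01 (n := n)))
    rw [map_sub, map_sub, X_pow_eq, XpowX_eq,
      vanish_index hm 1 (by rw [h10]; simp) 1,
      vanish_index hm 1 (by
        rw [h10]
        simp [Finsupp.single_apply, h01 (n := n)]) 1,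
      vanish_zterm hm 0 (by simp only [Finsupp.single_eq_same]; omega) z,
      sub_zero, sub_zero]
  · intro m hm
    have h10 : (Finsupp.single (0 : Fin (n + 2)) 2) 1 = 0 := hB 1 (Ne.symm (h01 (n := n)))
    rw [XpowX_eq]
    exact vanish_index hm 1 (by rw [h10]; simp [Finsupp.single_apply, h01 (n := n)]) 1

private lemma Ipz_le_J1 {s t : ℕ} (hs : 3 ≤ s) (hq : 3 ≤ s - t + 1) (ht2 : 2 ≤ t)
    (z : MvPowerSeries (Fin (n + 2)) k) :
    Ipz k n s t 0 z ≤ (J1 : Ideal (MvPowerSeries (Fin (n + 2)) k)) := by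
  rw [Ipz, Iy, Ideal.span_le]
  intro f hf
  simp only [Set.mem_union, Set.mem_setOf_eq, Set.mem_insert_iff, Set.mem_singleton_iff] at hf
  rw [SetLike.mem_coe, mem_J1]
  have hB2 : ∀ l : Fin (n + 2), l ≠ 1 → (Finsupp.single (1 : Fin (n + 2)) 2) l = 0 := by
    intro l hl
    simp [Finsupp.single_apply, Ne.symm hl]
  have hd2_0 : (Finsupp.single (1 : Fin (n + 2)) 2) 0 = 0 := hB2 0 (h01 (n := n))
  have hd1_0 : ((Finsupp.single (0 : Fin (n + 2)) 1 + Finsupp.single 1 1 : Fin (n + 2) →₀ ℕ)) 0 = 1 := by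
    simp [Finsupp.single_apply, Ne.symm (h01 (n := n))]
  have hd1_1 : ((Finsupp.single (0 : Fin (n + 2)) 1 + Finsupp.single 1 1 : Fin (n + 2) →₀ ℕ)) 1 = 1 := by
    simp [Finsupp.single_apply, h01 (n := n)]
  have hd1_l : ∀ l : Fin (n + 2), l ≠ 0 → l ≠ 1 →
      ((Finsupp.single (0 : Fin (n + 2)) 1 + Finsupp.single 1 1 : Fin (n + 2) →₀ ℕ)) l = 0 := by
    intro l hl0 hl1
    simp [Finsupp.single_apply, Ne.symm hl0, Ne.symm hl1]
  have hBm : ∀ m : Fin (n + 2) →₀ ℕ,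
      (m ≤ Finsupp.single (0 : Fin (n + 2)) 1 ∨ m ≤ Finsupp.single (1 : Fin (n + 2)) 1) →
      ∀ l, m l ≤ 1 := by
    rintro m (hm' | hm') l <;>
      · have := Finsupp.le_def.mp hm' l
        simp only [Finsupp.single_apply] at this
        split_ifs at this <;> omega
  rcases hf with ((⟨i, j, hij, hne, rfl⟩ | ⟨j, hj2, rfl⟩) | rfl | rfl)
  · -- X i * X j
    have hj0 : j ≠ 0 := by
      rintro rfl
      exact absurd hij (Fin.not_lt_zero i)
    constructor
    · have hj1 : j ≠ 1 := by
        rintro rfl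
        have hi0 : i = 0 := by
          have hlt := hij
          rw [Fin.lt_def] at hlt
          simp only [Fin.val_one] at hlt
          exact Fin.ext (by simp only [Fin.val_zero]; omega)
        exact hne (by rw [hi0])
      rw [XX_eq, vanish_pair (b := 1) (ne_of_lt hij) le_rfl hB2 1,
        vanish_index le_rfl j (by
          rw [hd1_l j hj0 hj1]
          simp [Finsupp.single_apply]) 1, add_zero]
    · intro m hm
      rw [XX_eq]
      rcases hm with hm | hm
      · exact vanish_pair (b := 0) (ne_of_lt hij) hm
          (fun l hl => by simp [Finsupp.single_apply, Ne.symm hl]) 1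
      · exact vanish_pair (b := 1) (ne_of_lt hij) hm
          (fun l hl => by simp [Finsupp.single_apply, Ne.symm hl]) 1
  · -- X j ^ 2 - X 0 ^ s
    have hj0 : j ≠ 0 := by intro he; rw [he] at hj2; simp at hj2
    have hj1 : j ≠ 1 := by intro he; rw [he] at hj2; simp at hj2
    constructor
    · rw [map_sub, map_sub, X_pow_eq, X_pow_eq,
        vanish_index le_rfl j (by rw [hB2 j hj1]; simp) 1,
        vanish_index le_rfl 0 (by rw [hd2_0]; simp only [Finsupp.single_eq_same]; omega) 1,
        vanish_index le_rfl j (by rw [hd1_l j hj0 hj1]; simp) 1,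
        vanish_index le_rfl 0 (by rw [hd1_0]; simp only [Finsupp.single_eq_same]; omega) 1]
      ring
    · intro m hm
      have hb := hBm m hm
      rw [map_sub, X_pow_eq, X_pow_eq,
        coeff_monomial_ne (fun he => by
          have := hb j; rw [he] at this; simp only [Finsupp.single_eq_same] at this; omega) 1,
        coeff_monomial_ne (fun he => by
          have := hb 0; rw [he] at this; simp only [Finsupp.single_eq_same] at this; omega) 1,
        sub_zero]
  · -- X 1 ^ 2 - X 0 ^ (0 + 1) * X 1 - z * X 0 ^ (s - t + 1)
    constructor
    · have e1 : coeff (Finsupp.single (1 : Fin (n + 2)) 2)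
          ((X 1 : MvPowerSeries (Fin (n + 2)) k) ^ 2) = 1 := by
        rw [X_pow_eq]; exact coeff_monomial_same _ _
      have e2 : coeff (Finsupp.single (1 : Fin (n + 2)) 2)
          ((X 0 : MvPowerSeries (Fin (n + 2)) k) ^ (0 + 1) * X 1) = 0 := by
        rw [XpowX_eq]
        exact vanish_index le_rfl 0 (by
          rw [hd2_0]
          simp [Finsupp.single_apply, Ne.symm (h01 (n := n))]) 1
      have e3 : coeff (Finsupp.single (1 : Fin (n + 2)) 2)
          (z * (X 0 : MvPowerSeries (Fin (n + 2)) k) ^ (s - t + 1)) = 0 :=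
        vanish_zterm le_rfl 0 (by rw [hd2_0]; omega) z
      have f1 : coeff (Finsupp.single (0 : Fin (n + 2)) 1 + Finsupp.single 1 1)
          ((X 1 : MvPowerSeries (Fin (n + 2)) k) ^ 2) = 0 := by
        rw [X_pow_eq]
        exact vanish_index le_rfl 1 (by rw [hd1_1]; simp) 1
      have f2 : coeff (Finsupp.single (0 : Fin (n + 2)) 1 + Finsupp.single 1 1)
          ((X 0 : MvPowerSeries (Fin (n + 2)) k) ^ (0 + 1) * X 1) = 1 := by
        rw [XpowX_eq]
        exact coeff_monomial_same _ _
      have f3 : coeff (Finsupp.single (0 : Fin (n + 2)) 1 + Finsupp.single 1 1)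
          (z * (X 0 : MvPowerSeries (Fin (n + 2)) k) ^ (s - t + 1)) = 0 :=
        vanish_zterm le_rfl 0 (by rw [hd1_0]; omega) z
      rw [map_sub, map_sub, map_sub, map_sub, e1, e2, e3, f1, f2, f3]
      ring
    · intro m hm
      have hb := hBm m hm
      have e1 : coeff m ((X 1 : MvPowerSeries (Fin (n + 2)) k) ^ 2) = 0 := by
        rw [X_pow_eq]
        exact coeff_monomial_ne (fun he => by
          have := hb 1; rw [he] at this; simp only [Finsupp.single_eq_same] at this; omega) 1
      have e2 : coeff m ((X 0 : MvPowerSeries (Fin (n + 2)) k) ^ (0 + 1) * X 1) = 0 := by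
        rw [XpowX_eq]
        refine coeff_monomial_ne (fun he => ?_) 1
        rcases hm with hm' | hm'
        · have := Finsupp.le_def.mp hm' 1
          rw [he] at this
          simp [Finsupp.single_apply, h01 (n := n), Ne.symm (h01 (n := n))] at this
        · have := Finsupp.le_def.mp hm' 0
          rw [he] at this
          simp [Finsupp.single_apply, h01 (n := n), Ne.symm (h01 (n := n))] at this
      have e3 : coeff m (z * (X 0 : MvPowerSeries (Fin (n + 2)) k) ^ (s - t + 1)) = 0 := by
        rw [X_pow_eq, coeff_mul_monomial, if_neg]
        intro hle
        have h1 := Finsupp.single_le_iff.mp hle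
        have h2 := hb 0
        omega
      rw [map_sub, map_sub, e1, e2, e3, sub_zero, sub_zero]
  · -- X 0 ^ t * X 1
    constructor
    · rw [XpowX_eq,
        vanish_index le_rfl 0 (by
          rw [hd2_0]
          simp only [Finsupp.add_apply, Finsupp.single_eq_same,
            Finsupp.single_apply, if_neg (Ne.symm (h01 (n := n)))]
          omega) 1,
        vanish_index le_rfl 0 (by
          rw [hd1_0]
          simp only [Finsupp.add_apply, Finsupp.single_eq_same,
            Finsupp.single_apply, if_neg (Ne.symm (h01 (n := n)))]
          omega) 1, add_zero]
    · intro m hm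
      have hb := hBm m hm
      rw [XpowX_eq]
      refine coeff_monomial_ne (fun he => ?_) 1
      have := hb 0
      rw [he] at this
      simp only [Finsupp.add_apply, Finsupp.single_eq_same, Finsupp.single_apply,
        if_neg (Ne.symm (h01 (n := n)))] at this
      omega

end Helpers5

section Final

open MvPowerSeries Finsupp

variable {k : Type*} [Field k] {n : ℕ}

private lemma coeff_L_zero (a : Fin (n + 2) → MvPowerSeries (Fin (n + 2)) k) :
    coeff (0 : Fin (n + 2) →₀ ℕ) (∑ i, a i * X i) = 0 := by
  rw [map_sum]
  refine Finset.sum_eq_zero fun j _ => ?_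
  rw [X_def, coeff_mul_monomial, if_neg]
  intro hle
  have := Finsupp.single_le_iff.mp hle
  simp at this

private lemma coeff_L_single (a : Fin (n + 2) → MvPowerSeries (Fin (n + 2)) k) (i : Fin (n + 2)) :
    coeff (Finsupp.single i 1) (∑ j, a j * X j) = coeff 0 (a i) := by
  rw [map_sum, Finset.sum_eq_single i ?other (fun hcon => absurd (Finset.mem_univ i) hcon)]
  · rw [X_def, coeff_mul_monomial, if_pos le_rfl, tsub_self, mul_one]
  case other =>
    intro j _ hj
    rw [X_def, coeff_mul_monomial, if_neg]
    intro hle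
    have := Finsupp.single_le_iff.mp hle
    simp [Finsupp.single_apply, Ne.symm hj] at this

private lemma coeff_L_sq (a : Fin (n + 2) → MvPowerSeries (Fin (n + 2)) k) (i : Fin (n + 2)) :
    coeff (Finsupp.single i 2) ((∑ j, a j * X j) * (∑ j, a j * X j))
      = coeff 0 (a i) * coeff 0 (a i) := by
  classical
  rw [coeff_mul,
    Finset.sum_eq_single_of_mem (Finsupp.single i 1, Finsupp.single i 1) ?mem ?other]
  · rw [coeff_L_single]
  case mem => rw [Finset.HasAntidiagonal.mem_antidiagonal, ← Finsupp.single_add]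
  case other =>
    rintro ⟨m1, m2⟩ hp hne
    have hadd : m1 + m2 = Finsupp.single i 2 := Finset.HasAntidiagonal.mem_antidiagonal.mp hp
    have hm1le : m1 ≤ Finsupp.single i 2 := by
      rw [← hadd]; exact self_le_add_right m1 m2
    have hcl := le_single_classify hm1le
    have hle2 : m1 i ≤ 2 := by
      have := Finsupp.le_def.mp hm1le i
      simpa using this
    have hval : m1 i = 0 ∨ m1 i = 1 ∨ m1 i = 2 := by omega
    rcases hval with hv | hv | hv
    · rw [show m1 = 0 by rw [hcl, hv, Finsupp.single_zero], coeff_L_zero, zero_mul]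
    · have hm1 : m1 = Finsupp.single i 1 := by rw [hcl, hv]
      have hm2 : m2 = Finsupp.single i 1 := by
        have h2 := hadd
        rw [hm1, show (Finsupp.single i 2 : Fin (n + 2) →₀ ℕ)
          = Finsupp.single i 1 + Finsupp.single i 1 by rw [← Finsupp.single_add]] at h2
        exact add_left_cancel h2
      exact absurd (by rw [hm1, hm2]) hne
    · have hm1' : m1 = Finsupp.single i 2 := by rw [hcl, hv]
      have hm2 : m2 = 0 := by
        have h2 := hadd
        rw [hm1'] at h2
        exact add_eq_left.mp h2
      rw [hm2, coeff_L_zero, mul_zero]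

private lemma coeff_L_mix (a : Fin (n + 2) → MvPowerSeries (Fin (n + 2)) k)
    (ha0 : coeff 0 (a 0) = 0) :
    coeff (Finsupp.single (0 : Fin (n + 2)) 1 + Finsupp.single 1 1)
      ((∑ j, a j * X j) * (∑ j, a j * X j)) = 0 := by
  classical
  have hsmall : ∀ m, m ≤ Finsupp.single (0 : Fin (n + 2)) 1 →
      coeff m (∑ j, a j * X j) = 0 := by
    intro m hm
    have hcl := le_single_classify hm
    have hb : m 0 ≤ 1 := by
      have := Finsupp.le_def.mp hm 0
      simpa using this
    rcases Nat.le_one_iff_eq_zero_or_eq_one.mp hb with hv | hv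
    · rw [show m = 0 by rw [hcl, hv, Finsupp.single_zero], coeff_L_zero]
    · rw [show m = Finsupp.single (0 : Fin (n + 2)) 1 by rw [hcl, hv], coeff_L_single, ha0]
  have hkey : ∀ m : Fin (n + 2) →₀ ℕ,
      m ≤ Finsupp.single (0 : Fin (n + 2)) 1 + Finsupp.single 1 1 → m 1 = 0 →
      coeff m (∑ j, a j * X j) = 0 := by
    intro m hm hm1
    rcases sub_d1 hm with he | hle | hle
    · exfalso
      rw [he] at hm1
      simp [Finsupp.single_apply, h01 (n := n)] at hm1
    · exact hsmall m hle
    · have := le_single_classify hle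
      rw [this, hm1, Finsupp.single_zero]
      exact hsmall 0 (zero_le)
  rw [coeff_mul]
  refine Finset.sum_eq_zero fun p hp => ?_
  have hadd : p.1 + p.2 = Finsupp.single (0 : Fin (n + 2)) 1 + Finsupp.single 1 1 :=
    Finset.HasAntidiagonal.mem_antidiagonal.mp hp
  have h1 : p.1 1 + p.2 1 = 1 := by
    have := DFunLike.congr_fun hadd 1
    simpa [Finsupp.single_apply, h01 (n := n)] using this
  have hle1 : p.1 ≤ Finsupp.single (0 : Fin (n + 2)) 1 + Finsupp.single 1 1 := by
    rw [← hadd]; exact self_le_add_right _ _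
  have hle2 : p.2 ≤ Finsupp.single (0 : Fin (n + 2)) 1 + Finsupp.single 1 1 := by
    rw [← hadd]; exact le_add_self
  rcases Nat.eq_zero_or_pos (p.1 1) with hz | hpos
  · rw [hkey p.1 hle1 hz, zero_mul]
  · rw [hkey p.2 hle2 (by omega), mul_zero]

end Final

open MvPowerSeries in
/-- If `s ≥ t + 2` and `l = Σ aᵢ xᵢ` satisfies `l² ∈ I_{p,z} + n³`, then `a₁ ∈ n`;
and if moreover `p = 0`, then `a₁, a₂ ∈ n`. -/
theorem stmt_9 {k : Type*} [Field k] [IsAlgClosed k] [CharZero k] (n s t : ℕ)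
    (hst : t + 1 ≤ s) (ht : 3 ≤ t + 1) (hs2 : t + 2 ≤ s)
    (p : ℕ) (z : MvPowerSeries (Fin (n + 2)) k) (hz : IsUnit z)
    (a : Fin (n + 2) → MvPowerSeries (Fin (n + 2)) k)
    (hl : (∑ i : Fin (n + 2), a i * X i) ^ 2 ∈ Ipz k n s t p z + (nIdeal k (n + 2)) ^ 3) :
    a 0 ∈ nIdeal k (n + 2) ∧ (p = 0 → a 0 ∈ nIdeal k (n + 2) ∧ a 1 ∈ nIdeal k (n + 2)) := by
  have hs3 : 3 ≤ s := by omega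
  have hq : 3 ≤ s - t + 1 := by omega
  have ht2 : 2 ≤ t := by omega
  have hsum : Ipz k n s t p z + (nIdeal k (n + 2)) ^ 3 ≤ Jz (0 : Fin (n + 2)) := by
    rw [Submodule.add_eq_sup]
    exact sup_le (Ipz_le_Jz p hs3 hq z) (le_trans pow3_le_Dlt (Dlt3_le_Jz 0))
  have hJz := hsum hl
  rw [mem_Jz] at hJz
  have hsq := hJz (Finsupp.single (0 : Fin (n + 2)) 2) le_rfl
  rw [pow_two, coeff_L_sq] at hsq
  have ha0 : coeff 0 (a 0) = 0 := mul_self_eq_zero.mp hsq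
  refine ⟨mem_nIdeal_of_constantCoeff ha0, ?_⟩
  rintro rfl
  refine ⟨mem_nIdeal_of_constantCoeff ha0, ?_⟩
  have hsum1 : Ipz k n s t 0 z + (nIdeal k (n + 2)) ^ 3
      ≤ (J1 : Ideal (MvPowerSeries (Fin (n + 2)) k)) := by
    rw [Submodule.add_eq_sup]
    exact sup_le (Ipz_le_J1 hs3 hq ht2 z) (le_trans pow3_le_Dlt Dlt3_le_J1)
  have hJ1 := hsum1 hl
  rw [mem_J1] at hJ1
  have hpair := hJ1.1
  rw [pow_two, coeff_L_sq, coeff_L_mix a ha0, add_zero] at hpair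
  exact mem_nIdeal_of_constantCoeff (mul_self_eq_zero.mp hpair)
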